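/- Let n ≥ 1 and let G be a graph on exactly 2n vertices that admits a perfect matching M of size n (so every vertex of G is an endpoint of an edge of M), and let m denote the number of edges of G. Then there is a subset M' ⊆ M of size at least n²/(3m) that is an induced matching in G. -/
import Mathlib


/-- A set of vertices is independent: pairwise nonadjacent. -/
def IsIndep {V : Type*} (G : SimpleGraph V) (s : Set V) : Prop :=
  s.Pairwise fun u v => ¬ G.Adj u v

/-- Independence number of the subgraph of `G` induced by `X`. -/
noncomputable def indepNumOn {V : Type*} (G : SimpleGraph V) (X : Set V) : ℕ :=
  sSup {k | ∃ s : Finset V, ↑s ⊆ X ∧ IsIndep G ↑s ∧ s.card = k}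

/-- `M` is a matching in `G`: adjacent endpoints, pairwise vertex-disjoint edges. -/
def IsMatching' {V : Type*} (G : SimpleGraph V) (M : Finset (V × V)) : Prop :=
  (∀ e ∈ M, G.Adj e.1 e.2) ∧
  ∀ e ∈ M, ∀ f ∈ M, e ≠ f →
    e.1 ≠ f.1 ∧ e.1 ≠ f.2 ∧ e.2 ≠ f.1 ∧ e.2 ≠ f.2

/-- `M` is an induced matching in `G`. -/
def IsInducedMatching {V : Type*} (G : SimpleGraph V) (M : Finset (V × V)) : Prop :=
  IsMatching' G M ∧
  ∀ e ∈ M, ∀ f ∈ M, e ≠ f →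
    ¬ G.Adj e.1 f.1 ∧ ¬ G.Adj e.1 f.2 ∧ ¬ G.Adj e.2 f.1 ∧ ¬ G.Adj e.2 f.2

/-- `μ(G, X)`: maximum size of an induced matching in `G` every edge of which
has an endpoint in `X`. -/
noncomputable def indMatchNumOn {V : Type*} (G : SimpleGraph V) (X : Set V) : ℕ :=
  sSup {k | ∃ M : Finset (V × V), IsInducedMatching G M ∧
    (∀ e ∈ M, e.1 ∈ X ∨ e.2 ∈ X) ∧ M.card = k}

/-- `(T, bag)` is a tree decomposition of `G`. -/
structure IsTreeDecomp {V : Type*} (G : SimpleGraph V) {ι : Type}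
    (T : SimpleGraph ι) (bag : ι → Set V) : Prop where
  isTree : T.IsTree
  edge_mem : ∀ ⦃u v : V⦄, G.Adj u v → ∃ x, u ∈ bag x ∧ v ∈ bag x
  support_connected : ∀ v : V, (T.induce {x | v ∈ bag x}).Connected

/-- A (bundled) tree decomposition of `G`. -/
structure TreeDecomp {V : Type*} (G : SimpleGraph V) where
  ι : Type
  tree : SimpleGraph ι
  bag : ι → Set V
  is_td : IsTreeDecomp G tree bag

/-- Independence number of a tree decomposition. -/
noncomputable def TreeDecomp.alpha {V : Type*} {G : SimpleGraph V} (D : TreeDecomp G) : ℕ :=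
  sSup {k | ∃ x : D.ι, k = indepNumOn G (D.bag x)}

/-- Induced matching number of a tree decomposition. -/
noncomputable def TreeDecomp.mu {V : Type*} {G : SimpleGraph V} (D : TreeDecomp G) : ℕ :=
  sSup {k | ∃ x : D.ι, k = indMatchNumOn G (D.bag x)}

/-- Tree-independence number of `G`. -/
noncomputable def treeIndepNum {V : Type*} (G : SimpleGraph V) : ℕ :=
  sInf {k | ∃ D : TreeDecomp G, D.alpha = k}

/-- Induced matching treewidth of `G`. -/
noncomputable def imTreewidth {V : Type*} (G : SimpleGraph V) : ℕ :=
  sInf {k | ∃ D : TreeDecomp G, D.mu = k}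

/-- `G` has no induced subgraph isomorphic to `K_{t,t}`. -/
def KttFree {V : Type*} (G : SimpleGraph V) (t : ℕ) : Prop :=
  IsEmpty (completeBipartiteGraph (Fin t) (Fin t) ↪g G)

/-- `G` contains `K_{t,t}` as a (not necessarily induced) subgraph. -/
def HasKttSubgraph {V : Type*} (G : SimpleGraph V) (t : ℕ) : Prop :=
  ∃ A B : Finset V, Disjoint A B ∧ A.card = t ∧ B.card = t ∧
    ∀ a ∈ A, ∀ b ∈ B, G.Adj a b

/-- `G` is bipartite: its vertex set is the union of two independent sets. -/
def IsBipartite {V : Type*} (G : SimpleGraph V) : Prop :=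
  ∃ A B : Set V, A ∪ B = Set.univ ∧ IsIndep G A ∧ IsIndep G B

/-- `N(X)`: vertices outside `X` adjacent to at least one vertex of `X`. -/
def nbhd {V : Type*} (G : SimpleGraph V) (X : Set V) : Set V :=
  {v | v ∉ X ∧ ∃ u ∈ X, G.Adj u v}


private lemma key_ineq (k1 d E t : ℝ) (hk1 : 0 ≤ k1) (hd : 0 ≤ d) (ht : 0 ≤ t)
    (hdeg : (k1 + d + 1) * d ≤ E)
    (hIH : k1^2 ≤ t * (k1 + E - (d+1)*d)) :
    (k1+d+1)^2 ≤ (t+1)*((k1+d+1)+E) := by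
  have hBp : 0 ≤ k1 + E - (d+1)*d := by nlinarith [mul_nonneg hk1 hd]
  have hB : 0 ≤ k1+d+1+E := by nlinarith
  rcases eq_or_lt_of_le hBp with h0 | hpos
  · have hk10 : k1 = 0 := by nlinarith [mul_nonneg hk1 hd]
    have hEd : E = (d+1)*d := by nlinarith
    nlinarith [mul_nonneg ht hB]
  · have h1 : 0 ≤ (k1+d+1+E) * (t*(k1+E-(d+1)*d) - k1^2) :=
      mul_nonneg hB (by linarith)
    nlinarith [h1, sq_nonneg (E-(k1+d+1)*d), hpos]

private lemma card_filter_product {α : Type*} [DecidableEq α]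
    (r : α → α → Prop) [DecidableRel r] (T S : Finset α) :
    ((T ×ˢ S).filter fun p => r p.1 p.2).card
      = ∑ a ∈ T, (S.filter fun b => r a b).card := by
  induction T using Finset.induction_on with
  | empty => simp
  | @insert a T ha ih =>
    rw [Finset.sum_insert ha, Finset.insert_eq, Finset.union_product, Finset.filter_union,
      Finset.card_union_of_disjoint, ih]
    · congr 1
      rw [Finset.singleton_product, Finset.filter_map, Finset.card_map]
      congr 1
    · rw [Finset.disjoint_left]
      rintro ⟨x, y⟩ hx hy
      simp only [Finset.mem_filter, Finset.mem_product, Finset.singleton_product,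
        Finset.mem_map, Finset.mem_singleton] at hx hy
      obtain ⟨⟨b, hb, hbe⟩, -⟩ := hx
      cases hbe
      exact ha hy.1.1

private lemma turan_aux {α : Type*} [DecidableEq α] (r : α → α → Prop) [DecidableRel r]
    (hsym : ∀ a b, r a b → r b a) (hirr : ∀ a, ¬ r a a) :
    ∀ (N : ℕ) (S : Finset α), S.card ≤ N →
      ∃ T ⊆ S, (∀ a ∈ T, ∀ b ∈ T, a ≠ b → ¬ r a b) ∧
        ((S.card : ℝ))^2 ≤ (T.card : ℝ) *
          ((S.card : ℝ) + (((S ×ˢ S).filter fun p => r p.1 p.2).card : ℝ)) := by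
  intro N
  induction N with
  | zero =>
    intro S hS
    have : S = ∅ := Finset.card_eq_zero.mp (Nat.le_zero.mp hS)
    subst this
    exact ⟨∅, Finset.Subset.refl _, by simp, by simp⟩
  | succ N ih =>
    intro S hS
    rcases S.eq_empty_or_nonempty with rfl | hne
    · exact ⟨∅, Finset.Subset.refl _, by simp, by simp⟩
    obtain ⟨v, hv, hmin⟩ := S.exists_min_image (fun a => (S.filter fun b => r a b).card) hne
    set Nv := S.filter (fun b => r v b) with hNvdef
    have hvNv : v ∉ Nv := by simp [hNvdef, hirr v]
    set R := insert v Nv with hRdef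
    have hRS : R ⊆ S := by
      intro x hx
      rcases Finset.mem_insert.mp hx with rfl | hx
      · exact hv
      · exact Finset.mem_of_mem_filter _ hx
    set S' := S \ R with hS'def
    have hcardR : R.card = Nv.card + 1 := Finset.card_insert_of_notMem hvNv
    have hkge : Nv.card + 1 ≤ S.card := hcardR ▸ Finset.card_le_card hRS
    have hcardS' : S'.card + (Nv.card + 1) = S.card := by
      rw [hS'def, Finset.card_sdiff_of_subset hRS, hcardR]
      omega
    have hS'le : S'.card ≤ N := by omega
    obtain ⟨T', hT'sub, hT'ind, hT'num⟩ := ih S' hS'le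
    have hT'S : T' ⊆ S := hT'sub.trans (Finset.sdiff_subset)
    have hvT' : v ∉ T' := fun h => (Finset.mem_sdiff.mp (hT'sub h)).2 (Finset.mem_insert_self _ _)
    refine ⟨insert v T', Finset.insert_subset hv hT'S, ?_, ?_⟩
    · intro a ha b hb hab
      rcases Finset.mem_insert.mp ha with rfl | ha' <;>
        rcases Finset.mem_insert.mp hb with rfl | hb'
      · exact absurd rfl hab
      · intro hr
        exact (Finset.mem_sdiff.mp (hT'sub hb')).2
          (Finset.mem_insert_of_mem (Finset.mem_filter.mpr ⟨hT'S hb', hr⟩))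
      · intro hr
        exact (Finset.mem_sdiff.mp (hT'sub ha')).2
          (Finset.mem_insert_of_mem (Finset.mem_filter.mpr ⟨hT'S ha', hsym _ _ hr⟩))
      · exact hT'ind a ha' b hb' hab
    · -- numeric part
      have hdeg_sum : S.card * Nv.card ≤ ((S ×ˢ S).filter fun p => r p.1 p.2).card := by
        rw [card_filter_product r S S]
        calc S.card * Nv.card = ∑ _a ∈ S, Nv.card := by rw [Finset.sum_const, smul_eq_mul]
        _ ≤ ∑ a ∈ S, (S.filter fun b => r a b).card := Finset.sum_le_sum (fun a ha => hmin a ha)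
      -- removal bound
      have hrem : (((S' ×ˢ S').filter fun p => r p.1 p.2).card) + (Nv.card + 1) * Nv.card
          ≤ ((S ×ˢ S).filter fun p => r p.1 p.2).card := by
        have hA : (Nv.card + 1) * Nv.card ≤ ((R ×ˢ S).filter fun p => r p.1 p.2).card := by
          rw [card_filter_product r R S]
          calc (Nv.card + 1) * Nv.card = ∑ _a ∈ R, Nv.card := by
                rw [Finset.sum_const, smul_eq_mul, hcardR]
          _ ≤ ∑ a ∈ R, (S.filter fun b => r a b).card :=
              Finset.sum_le_sum (fun a ha => hmin a (hRS ha))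
        have hdisj : Disjoint ((S' ×ˢ S').filter fun p => r p.1 p.2)
            ((R ×ˢ S).filter fun p => r p.1 p.2) := by
          rw [Finset.disjoint_left]
          rintro ⟨x, y⟩ hx hy
          simp only [Finset.mem_filter, Finset.mem_product] at hx hy
          exact (Finset.mem_sdiff.mp hx.1.1).2 hy.1.1
        have hS'S : S' ⊆ S := Finset.sdiff_subset
        have hsub : ((S' ×ˢ S').filter fun p => r p.1 p.2) ∪
            ((R ×ˢ S).filter fun p => r p.1 p.2) ⊆ ((S ×ˢ S).filter fun p => r p.1 p.2) :=
          Finset.union_subset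
            (Finset.filter_subset_filter _ (Finset.product_subset_product hS'S hS'S))
            (Finset.filter_subset_filter _ (Finset.product_subset_product hRS
              (Finset.Subset.refl S)))
        have hcu := Finset.card_union_of_disjoint hdisj
        have hle := Finset.card_le_card hsub
        omega
      -- assemble reals
      have hks : (S.card : ℝ) = (S'.card : ℝ) + (Nv.card : ℝ) + 1 := by
        exact_mod_cast hcardS'.symm
      rw [Finset.card_insert_of_notMem hvT', hks]
      push_cast
      have hE'le : ((((S' ×ˢ S').filter fun p => r p.1 p.2).card : ℝ))
          ≤ (((S ×ˢ S).filter fun p => r p.1 p.2).card : ℝ)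
            - ((Nv.card : ℝ) + 1) * (Nv.card : ℝ) := by
        have h := (Nat.cast_le (α := ℝ)).mpr hrem
        push_cast at h
        linarith
      refine key_ineq _ _ _ _ (Nat.cast_nonneg _) (Nat.cast_nonneg _) (Nat.cast_nonneg _) ?_ ?_
      · have h := hdeg_sum
        rw [← hcardS'] at h
        have h2 := (Nat.cast_le (α := ℝ)).mpr h
        push_cast at h2
        linarith
      · refine le_trans hT'num ?_
        have ht0 : (0:ℝ) ≤ (T'.card : ℝ) := Nat.cast_nonneg _
        nlinarith [hE'le]

/-- if `G` has exactly `2n` vertices, a perfect matching `M` of size `n`,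
and `m` edges, then some `M' ⊆ M` of size at least `n²/(3m)` is an induced matching. -/
theorem stmt16 (n : ℕ) (hn : 1 ≤ n) (V : Type) [Fintype V]
    (G : SimpleGraph V) (hcard : Fintype.card V = 2 * n)
    (M : Finset (V × V)) (hM : IsMatching' G M) (hMcard : M.card = n)
    (hperf : ∀ v : V, ∃ e ∈ M, v = e.1 ∨ v = e.2) :
    ∃ M' : Finset (V × V), M' ⊆ M ∧ IsInducedMatching G M' ∧
      (n : ℝ) ^ 2 / (3 * (G.edgeSet.ncard : ℝ)) ≤ (M'.card : ℝ) := by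
  classical
  obtain ⟨hMadj, hMdisj⟩ := hM
  -- the conflict relation on matching edges
  set r : (V × V) → (V × V) → Prop := fun e f =>
    e ≠ f ∧ (G.Adj e.1 f.1 ∨ G.Adj e.1 f.2 ∨ G.Adj e.2 f.1 ∨ G.Adj e.2 f.2) with hrdef
  have hsym : ∀ a b, r a b → r b a := by
    rintro a b ⟨hne, h⟩
    refine ⟨hne.symm, ?_⟩
    rcases h with h | h | h | h
    · exact Or.inl h.symm
    · exact Or.inr (Or.inr (Or.inl h.symm))
    · exact Or.inr (Or.inl h.symm)
    · exact Or.inr (Or.inr (Or.inr h.symm))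
  have hirr : ∀ a, ¬ r a a := fun a h => h.1 rfl
  obtain ⟨T, hTsub, hTind, hTnum⟩ := turan_aux r hsym hirr M.card M le_rfl
  -- uniqueness of the matching edge through a vertex
  have huniq : ∀ (u : V), ∀ e ∈ M, ∀ f ∈ M,
      (u = e.1 ∨ u = e.2) → (u = f.1 ∨ u = f.2) → e = f := by
    intro u e he f hf hue huf
    by_contra hne
    obtain ⟨h1, h2, h3, h4⟩ := hMdisj e he f hf hne
    rcases hue with rfl | rfl <;> rcases huf with h | h
    · exact h1 h
    · exact h2 h
    · exact h3 h
    · exact h4 h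
  refine ⟨T, hTsub, ⟨⟨fun e he => hMadj e (hTsub he),
    fun e he f hf hef => hMdisj e (hTsub he) f (hTsub hf) hef⟩, ?_⟩, ?_⟩
  · intro e he f hf hef
    have h4 : ¬ (G.Adj e.1 f.1 ∨ G.Adj e.1 f.2 ∨ G.Adj e.2 f.1 ∨ G.Adj e.2 f.2) :=
      fun hB => hTind e he f hf hef ⟨hef, hB⟩
    push_neg at h4
    exact h4
  · -- numeric part
    set mf := G.edgeFinset.card with hmf
    have hmeq : G.edgeSet.ncard = mf := by
      rw [hmf, SimpleGraph.edgeFinset]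
      exact Set.ncard_eq_toFinset_card' _
    set Mim := M.image (fun e => s(e.1, e.2)) with hMim
    have hMimcard : Mim.card = n := by
      rw [hMim, Finset.card_image_of_injOn, hMcard]
      intro e he f hf heq
      by_contra hne
      obtain ⟨h1, h2, h3, h4⟩ := hMdisj e he f hf hne
      rw [Sym2.eq_iff] at heq
      rcases heq with ⟨ha, hb⟩ | ⟨ha, hb⟩
      · exact h1 ha
      · exact h2 ha
    have hMimsub : Mim ⊆ G.edgeFinset := by
      intro x hx
      obtain ⟨e, he, rfl⟩ := Finset.mem_image.mp hx
      exact SimpleGraph.mem_edgeFinset.mpr (hMadj e he)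
    have hnm : n ≤ mf := by
      rw [← hMimcard]; exact Finset.card_le_card hMimsub
    -- injective encoding of ordered pairs
    set c := Fintype.card V with hc
    have hc0 : 0 < c := by omega
    set ei := Fintype.equivFin V with hei
    set ord : V × V → ℕ := fun p => c * (ei p.1).val + (ei p.2).val with hord
    have hordinj : Function.Injective ord := by
      intro p q h
      simp only [hord] at h
      have h2 : (c * (ei p.1).val + (ei p.2).val) % c
          = (c * (ei q.1).val + (ei q.2).val) % c := by rw [h]
      rw [Nat.mul_add_mod, Nat.mul_add_mod, Nat.mod_eq_of_lt (Fin.is_lt _),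
        Nat.mod_eq_of_lt (Fin.is_lt _)] at h2
      have hp2 : p.2 = q.2 := ei.injective (Fin.ext h2)
      have hp1 : p.1 = q.1 := by
        have hmul : c * (ei p.1).val = c * (ei q.1).val := by omega
        exact ei.injective (Fin.ext (Nat.eq_of_mul_eq_mul_left hc0 hmul))
      exact Prod.ext hp1 hp2
    -- witness function
    set w : (V × V) × (V × V) → Sym2 V := fun p =>
      if G.Adj p.1.1 p.2.1 then s(p.1.1, p.2.1)
      else if G.Adj p.1.1 p.2.2 then s(p.1.1, p.2.2)
      else if G.Adj p.1.2 p.2.1 then s(p.1.2, p.2.1)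
      else s(p.1.2, p.2.2) with hw
    have hwspec : ∀ p : (V × V) × (V × V), r p.1 p.2 → ∃ u v : V, w p = s(u, v) ∧
        G.Adj u v ∧ (u = p.1.1 ∨ u = p.1.2) ∧ (v = p.2.1 ∨ v = p.2.2) := by
      rintro p ⟨hne, hadj⟩
      simp only [hw]
      split_ifs with h1 h2 h3
      · exact ⟨_, _, rfl, h1, Or.inl rfl, Or.inl rfl⟩
      · exact ⟨_, _, rfl, h2, Or.inl rfl, Or.inr rfl⟩
      · exact ⟨_, _, rfl, h3, Or.inr rfl, Or.inl rfl⟩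
      · have h4 : G.Adj p.1.2 p.2.2 := by tauto
        exact ⟨_, _, rfl, h4, Or.inr rfl, Or.inr rfl⟩
    set C := (M ×ˢ M).filter (fun p => r p.1 p.2) with hC
    have hCbound : C.card ≤ (mf - n) * 2 := by
      have hmaps : ∀ p ∈ C, (w p, decide (ord p.1 < ord p.2))
          ∈ (G.edgeFinset \ Mim) ×ˢ (Finset.univ : Finset Bool) := by
        intro p hp
        rw [hC, Finset.mem_filter, Finset.mem_product] at hp
        obtain ⟨⟨hp1M, hp2M⟩, hpr⟩ := hp
        obtain ⟨u, v, hwp, huv, hu, hvv⟩ := hwspec p hpr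
        rw [Finset.mem_product]
        refine ⟨Finset.mem_sdiff.mpr ⟨?_, ?_⟩, Finset.mem_univ _⟩
        · rw [hwp]; exact SimpleGraph.mem_edgeFinset.mpr huv
        · intro hmem
          obtain ⟨g, hg, hge⟩ := Finset.mem_image.mp hmem
          rw [hwp] at hge
          rw [Sym2.eq_iff] at hge
          rcases hge with ⟨hga, hgb⟩ | ⟨hga, hgb⟩
          · have e1 : p.1 = g := huniq u p.1 hp1M g hg hu (Or.inl hga.symm)
            have e2 : p.2 = g := huniq v p.2 hp2M g hg hvv (Or.inr hgb.symm)
            exact hpr.1 (e1.trans e2.symm)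
          · have e1 : p.1 = g := huniq u p.1 hp1M g hg hu (Or.inr hgb.symm)
            have e2 : p.2 = g := huniq v p.2 hp2M g hg hvv (Or.inl hga.symm)
            exact hpr.1 (e1.trans e2.symm)
      have hinj : Set.InjOn (fun p => (w p, decide (ord p.1 < ord p.2))) ↑C := by
        intro p hp q hq heq
        rw [Finset.mem_coe, hC, Finset.mem_filter, Finset.mem_product] at hp hq
        obtain ⟨⟨hp1M, hp2M⟩, hpr⟩ := hp
        obtain ⟨⟨hq1M, hq2M⟩, hqr⟩ := hq
        obtain ⟨u, v, hwp, huv, hu, hvv⟩ := hwspec p hpr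
        obtain ⟨u', v', hwq, huv', hu', hv'⟩ := hwspec q hqr
        simp only [Prod.mk.injEq] at heq
        obtain ⟨hww, hbb⟩ := heq
        rw [hwp, hwq, Sym2.eq_iff] at hww
        rcases hww with ⟨rfl, rfl⟩ | ⟨rfl, rfl⟩
        · have e1 : p.1 = q.1 := huniq u p.1 hp1M q.1 hq1M hu hu'
          have e2 : p.2 = q.2 := huniq v p.2 hp2M q.2 hq2M hvv hv'
          exact Prod.ext e1 e2
        · have e1 : p.1 = q.2 := huniq u p.1 hp1M q.2 hq2M hu hv'
          have e2 : p.2 = q.1 := huniq v p.2 hp2M q.1 hq1M hvv hu'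
          have hne12 : p.1 ≠ p.2 := hpr.1
          have hordne : ord p.1 ≠ ord p.2 := fun h => hne12 (hordinj h)
          have hiff := decide_eq_decide.mp hbb
          rw [← e1, ← e2] at hiff
          omega
      calc C.card ≤ ((G.edgeFinset \ Mim) ×ˢ (Finset.univ : Finset Bool)).card :=
            Finset.card_le_card_of_injOn _ hmaps hinj
        _ = (mf - n) * 2 := by
            rw [Finset.card_product, Finset.card_univ, Fintype.card_bool,
              Finset.card_sdiff_of_subset hMimsub, hMimcard]
    -- conclude
    have h0 : 0 < mf := lt_of_lt_of_le hn hnm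
    have hmpos : (0:ℝ) < 3 * (G.edgeSet.ncard : ℝ) := by
      rw [hmeq]
      have : (0:ℝ) < (mf : ℝ) := by exact_mod_cast h0
      linarith
    rw [div_le_iff₀ hmpos, hmeq]
    have h3 : (M.card : ℝ) + (C.card : ℝ) ≤ 3 * (mf : ℝ) := by
      have hnat : M.card + C.card ≤ 3 * mf := by omega
      exact_mod_cast hnat
    have ht0 : (0:ℝ) ≤ (T.card : ℝ) := Nat.cast_nonneg _
    rw [hMcard] at hTnum h3
    nlinarith [hTnum, h3, ht0]
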